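/- Let Δ ≥ 2, s ≥ 1, and set N = Δ^{s+1} − 1. For an integer z with 0 ≤ z ≤ N, let a_0(z), …, a_s(z) ∈ {0, …, Δ−1} be the digits of z in base Δ, so z = Σ_{i=0}^{s} a_i(z)·Δ^i. Let 𝒜' be the 2-stage stochastic constraint matrix with n = N − 1 diagonal blocks indexed by z ∈ {2, …, N}, one first-stage column, and second-stage blocks of s+1 columns, defined as follows: for each z, the first row of block z has entry −1 in the first-stage column and entries a_0(z), …, a_s(z) in the s+1 second-stage columns of block z; the remaining s rows of block z have entry 0 in the first-stage column and carry the matrix 𝒞 ∈ ℤ^{s×(s+1)} (𝒞_{i,i} = Δ, 𝒞_{i,i+1} = −1, other entries 0) in the second-stage columns of block z; all other entries of 𝒜' are 0. Then every x ∈ ℤ^{1+(N−1)(s+1)} with 𝒜'x = 0 satisfies z ∣ x_1 for every z ∈ {2, …, N}, where x_1 is the first-stage coordinate; hence every nonzero such x satisfies ‖x‖_∞ ≥ |x_1| ≥ lcm(2, …, Δ^{s+1}−1). In particular, every Graver element of the 2-stage stochastic matrix 𝒜' (which has r = s+1 rows per block and all entries bounded by Δ in absolute value) has ∞-norm at least lcm(2,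 …, Δ^{s+1}−1), which is doubly exponential of order 2^{Ω(Δ^s)}. -/
import Mathlib


/-- A Graver element of an integer matrix `A`: a nonzero cycle that cannot be
written as a sum of two nonzero sign-compatible cycles. -/
def IsGraver {R C : Type*} [Fintype R] [Fintype C]
    (A : Matrix R C ℤ) (g : C → ℤ) : Prop :=
  g ≠ 0 ∧ A.mulVec g = 0 ∧
    ¬ ∃ u v : C → ℤ, u ≠ 0 ∧ v ≠ 0 ∧ A.mulVec u = 0 ∧ A.mulVec v = 0 ∧
        g = u + v ∧ ∀ i, 0 ≤ u i * v i

/-- The `i`-th digit of `z` in base `Δ`. -/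
def digit (Δ z i : ℕ) : ℕ := z / Δ ^ i % Δ

/-- The 2-stage stochastic lower-bound matrix `𝒜'` with one first-stage column
and `N - 1 = Δ^{s+1} - 2` diagonal blocks indexed by `z ∈ {2, …, N}` (block
`w` corresponds to `z = w + 2`), each with `r = s + 1` rows and `s + 1`
second-stage columns.  Within block `z`, the first row (`p.2 = 0`) has `-1` in
the first-stage column and the base-`Δ` digits `a_0(z), …, a_s(z)` in the
second-stage columns of block `z`; row `p.2 = i ≥ 1` carries row `i - 1` of
the matrix `𝒞` (entry `Δ` in column `i - 1`, entry `-1` in column `i`). -/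
def A' (Δ s : ℕ) :
    Matrix (Fin (Δ ^ (s + 1) - 2) × Fin (s + 1))
      (Unit ⊕ Fin (Δ ^ (s + 1) - 2) × Fin (s + 1)) ℤ :=
  fun p q =>
    match q with
    | Sum.inl _ => if (p.2 : ℕ) = 0 then -1 else 0
    | Sum.inr (w, j) =>
        if w = p.1 then
          if (p.2 : ℕ) = 0 then (digit Δ ((p.1 : ℕ) + 2) (j : ℕ) : ℤ)
          else if (j : ℕ) = (p.2 : ℕ) - 1 then (Δ : ℤ)
          else if (j : ℕ) = (p.2 : ℕ) then -1
          else 0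
        else 0

lemma row_eq (Δ s : ℕ) (x : (Unit ⊕ Fin (Δ ^ (s + 1) - 2) × Fin (s + 1)) → ℤ)
    (hx : (A' Δ s).mulVec x = 0) (p : Fin (Δ ^ (s + 1) - 2) × Fin (s + 1)) :
    A' Δ s p (Sum.inl ()) * x (Sum.inl ())
      + ∑ j, A' Δ s p (Sum.inr (p.1, j)) * x (Sum.inr (p.1, j)) = 0 := by
  have h := congrFun hx p
  simp only [Matrix.mulVec, dotProduct, Pi.zero_apply] at h
  rw [← h, Fintype.sum_sum_type, Fintype.sum_prod_type]
  congr 1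
  · simp
  · rw [Finset.sum_eq_single p.1]
    · intro w _ hw
      apply Finset.sum_eq_zero
      intro j _
      simp [A', hw]
    · intro habs; exact absurd (Finset.mem_univ _) habs

lemma stepA (Δ s : ℕ) (x : (Unit ⊕ Fin (Δ ^ (s + 1) - 2) × Fin (s + 1)) → ℤ)
    (hx : (A' Δ s).mulVec x = 0) (w : Fin (Δ ^ (s + 1) - 2)) :
    ∀ i (h : i < s + 1),
      x (Sum.inr (w, ⟨i, h⟩)) = Δ ^ i * x (Sum.inr (w, ⟨0, Nat.succ_pos s⟩)) := by
  intro i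
  induction i with
  | zero => intro h; simp
  | succ i ih =>
    intro h
    have hi : i < s + 1 := Nat.lt_of_succ_lt h
    have hr := row_eq Δ s x hx (w, ⟨i+1, h⟩)
    have h0 : A' Δ s (w, ⟨i+1, h⟩) (Sum.inl ()) = 0 := by simp [A']
    have hsummand : ∀ j : Fin (s+1),
        A' Δ s (w, ⟨i+1, h⟩) (Sum.inr (w, j)) * x (Sum.inr (w, j))
          = (if j = (⟨i, hi⟩ : Fin (s+1)) then (Δ:ℤ) * x (Sum.inr (w, ⟨i, hi⟩)) else 0)
          + (if j = (⟨i+1, h⟩ : Fin (s+1)) then -x (Sum.inr (w, ⟨i+1, h⟩)) else 0) := by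
      intro j
      by_cases hji : (j : ℕ) = i
      · have hj : j = ⟨i, hi⟩ := Fin.ext hji
        subst hj
        simp [A']
      · by_cases hji1 : (j : ℕ) = i + 1
        · have hj : j = ⟨i + 1, h⟩ := Fin.ext hji1
          subst hj
          simp [A', hji]
        · simp [A', Fin.ext_iff, hji, hji1]
    rw [h0, zero_mul, zero_add, Finset.sum_congr rfl (fun j _ => hsummand j),
      Finset.sum_add_distrib, Finset.sum_ite_eq' , Finset.sum_ite_eq'] at hr
    simp only [Finset.mem_univ, if_true] at hr
    rw [ih hi] at hr
    have hp : (Δ:ℤ) ^ (i+1) = Δ ^ i * Δ := pow_succ _ _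
    rw [hp]
    linarith

lemma digit_sum (Δ z : ℕ) (hΔ : 1 ≤ Δ) :
    ∀ k, ∑ i ∈ Finset.range k, digit Δ z i * Δ ^ i = z % Δ ^ k := by
  intro k
  induction k with
  | zero => simp [Nat.mod_one]
  | succ k ih =>
    rw [Finset.sum_range_succ, ih]
    have hpos : 0 < Δ ^ k := pow_pos hΔ k
    have h1 : z % Δ ^ k < Δ ^ k := Nat.mod_lt _ hpos
    have h2 : z / Δ ^ k % Δ < Δ := Nat.mod_lt _ hΔ
    have hmul : Δ ^ k * (z / Δ ^ k % Δ + 1) ≤ Δ ^ k * Δ := Nat.mul_le_mul_left _ h2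
    rw [Nat.mul_succ] at hmul
    have hlt : Δ ^ k * (z / Δ ^ k % Δ) + z % Δ ^ k < Δ ^ k * Δ := by linarith
    have key : z % Δ ^ (k+1) = z % Δ ^ k + digit Δ z k * Δ ^ k := by
      unfold digit
      conv_lhs => rw [← Nat.div_add_mod z (Δ ^ k)]
      rw [pow_succ, Nat.add_mod, Nat.mul_mod_mul_left,
        Nat.mod_eq_of_lt (h1.trans_le (Nat.le_mul_of_pos_right _ (by linarith))),
        Nat.mod_eq_of_lt hlt]
      ring
    omega

lemma stepB (Δ s : ℕ) (hΔ : 2 ≤ Δ) (x : (Unit ⊕ Fin (Δ ^ (s + 1) - 2) × Fin (s + 1)) → ℤ)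
    (hx : (A' Δ s).mulVec x = 0) (w : Fin (Δ ^ (s + 1) - 2)) :
    x (Sum.inl ()) = ((w : ℕ) + 2 : ℤ) * x (Sum.inr (w, ⟨0, Nat.succ_pos s⟩)) := by
  set y := x (Sum.inr (w, ⟨0, Nat.succ_pos s⟩)) with hy
  have hr := row_eq Δ s x hx (w, ⟨0, Nat.succ_pos s⟩)
  have h0 : A' Δ s (w, ⟨0, Nat.succ_pos s⟩) (Sum.inl ()) = -1 := by simp [A']
  have e1 : ∀ j : Fin (s+1),
      A' Δ s (w, ⟨0, Nat.succ_pos s⟩) (Sum.inr (w, j)) * x (Sum.inr (w, j))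
        = ((digit Δ ((w : ℕ) + 2) (j : ℕ) : ℤ) * (Δ : ℤ) ^ (j : ℕ)) * y := by
    intro j
    have hA : A' Δ s (w, ⟨0, Nat.succ_pos s⟩) (Sum.inr (w, j))
        = (digit Δ ((w : ℕ) + 2) (j : ℕ) : ℤ) := by simp [A']
    have hstep := stepA Δ s x hx w (j : ℕ) j.isLt
    rw [Fin.eta] at hstep
    rw [hA, hstep]
    ring
  have hsum : ∑ j, A' Δ s (w, ⟨0, Nat.succ_pos s⟩) (Sum.inr (w, j)) * x (Sum.inr (w, j))
      = ((w : ℕ) + 2 : ℤ) * y := by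
    rw [Finset.sum_congr rfl (fun j _ => e1 j), ← Finset.sum_mul]
    congr 1
    have hnat := digit_sum Δ ((w : ℕ) + 2) (by omega) (s + 1)
    have hlt : (w : ℕ) + 2 < Δ ^ (s + 1) := by
      have := w.isLt
      have h2 : 2 ≤ Δ ^ (s + 1) := le_trans hΔ (Nat.le_self_pow (by omega) Δ)
      omega
    rw [Nat.mod_eq_of_lt hlt] at hnat
    calc ∑ j : Fin (s+1), (digit Δ ((w : ℕ) + 2) (j : ℕ) : ℤ) * (Δ : ℤ) ^ (j : ℕ)
        = ∑ i ∈ Finset.range (s+1), (digit Δ ((w : ℕ) + 2) i : ℤ) * (Δ : ℤ) ^ i :=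
          Fin.sum_univ_eq_sum_range (fun i => (digit Δ ((w : ℕ) + 2) i : ℤ) * (Δ : ℤ) ^ i) (s+1)
      _ = ((w : ℕ) + 2 : ℤ) := by
          have hint := congrArg (Nat.cast : ℕ → ℤ) hnat
          push_cast at hint
          exact hint
  rw [h0, hsum] at hr
  linarith

/-- all entries of `𝒜'` are bounded by `Δ` in absolute value;
every kernel element `x` of `𝒜'` has its first-stage coordinate divisible by
every `z ∈ {2, …, Δ^{s+1} - 1}`; hence every nonzero kernel element `x`
satisfies `‖x‖_∞ ≥ |x₁| ≥ lcm(2, …, Δ^{s+1} - 1)`, and in particular every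
Graver element of `𝒜'` has infinity norm at least `lcm(2, …, Δ^{s+1} - 1)`. -/
theorem twoStage_lower_bound (Δ s : ℕ) (hΔ : 2 ≤ Δ) (hs : 1 ≤ s) :
    (∀ p q, |A' Δ s p q| ≤ (Δ : ℤ)) ∧
    (∀ x : (Unit ⊕ Fin (Δ ^ (s + 1) - 2) × Fin (s + 1)) → ℤ,
      (A' Δ s).mulVec x = 0 →
        (∀ z : ℕ, 2 ≤ z → z ≤ Δ ^ (s + 1) - 1 → (z : ℤ) ∣ x (Sum.inl ())) ∧
        (x ≠ 0 →
          ((Finset.lcm (Finset.Icc 2 (Δ ^ (s + 1) - 1)) id : ℕ) : ℤ)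
              ≤ |x (Sum.inl ())| ∧
          ∃ q, ((Finset.lcm (Finset.Icc 2 (Δ ^ (s + 1) - 1)) id : ℕ) : ℤ) ≤ |x q|)) ∧
    (∀ g, IsGraver (A' Δ s) g →
      ∃ q, ((Finset.lcm (Finset.Icc 2 (Δ ^ (s + 1) - 1)) id : ℕ) : ℤ) ≤ |g q|) := by
  have hpow4 : 4 ≤ Δ ^ (s + 1) := by
    calc (4 : ℕ) = 2 ^ 2 := rfl
      _ ≤ 2 ^ (s + 1) := Nat.pow_le_pow_right (by omega) (by omega)
      _ ≤ Δ ^ (s + 1) := Nat.pow_le_pow_left hΔ _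
  have key : ∀ x : (Unit ⊕ Fin (Δ ^ (s + 1) - 2) × Fin (s + 1)) → ℤ,
      (A' Δ s).mulVec x = 0 →
        (∀ z : ℕ, 2 ≤ z → z ≤ Δ ^ (s + 1) - 1 → (z : ℤ) ∣ x (Sum.inl ())) ∧
        (x ≠ 0 →
          ((Finset.lcm (Finset.Icc 2 (Δ ^ (s + 1) - 1)) id : ℕ) : ℤ)
              ≤ |x (Sum.inl ())| ∧
          ∃ q, ((Finset.lcm (Finset.Icc 2 (Δ ^ (s + 1) - 1)) id : ℕ) : ℤ) ≤ |x q|) := by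
    intro x hx
    have hdvd : ∀ z : ℕ, 2 ≤ z → z ≤ Δ ^ (s + 1) - 1 → (z : ℤ) ∣ x (Sum.inl ()) := by
      intro z h2 hN
      have hw : z - 2 < Δ ^ (s + 1) - 2 := by omega
      have hB := stepB Δ s hΔ x hx ⟨z - 2, hw⟩
      refine ⟨x (Sum.inr (⟨z - 2, hw⟩, ⟨0, Nat.succ_pos s⟩)), ?_⟩
      rw [hB]
      congr 1
      push_cast
      omega
    refine ⟨hdvd, ?_⟩
    intro hne
    have hx1 : x (Sum.inl ()) ≠ 0 := by
      intro h1
      apply hne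
      funext q
      cases q with
      | inl u =>
        cases u
        exact h1
      | inr wi =>
        obtain ⟨w, i⟩ := wi
        have hB := stepB Δ s hΔ x hx w
        rw [h1] at hB
        have hy : x (Sum.inr (w, ⟨0, Nat.succ_pos s⟩)) = 0 := by
          rcases mul_eq_zero.mp hB.symm with h | h
          · exfalso
            have : ((w : ℕ) : ℤ) + 2 ≠ 0 := by positivity
            exact this h
          · exact h
        have hA := stepA Δ s x hx w (i : ℕ) i.isLt
        rw [Fin.eta] at hA
        rw [Pi.zero_apply, hA, hy, mul_zero]
    have hLdvd : (Finset.lcm (Finset.Icc 2 (Δ ^ (s + 1) - 1)) id : ℕ)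
        ∣ (x (Sum.inl ())).natAbs := by
      apply Finset.lcm_dvd
      intro z hz
      rw [Finset.mem_Icc] at hz
      have := hdvd z hz.1 hz.2
      have h2 : ((z : ℤ)).natAbs ∣ (x (Sum.inl ())).natAbs :=
        Int.natAbs_dvd_natAbs.mpr this
      simpa using h2
    have hle : (Finset.lcm (Finset.Icc 2 (Δ ^ (s + 1) - 1)) id : ℕ)
        ≤ (x (Sum.inl ())).natAbs :=
      Nat.le_of_dvd (Int.natAbs_pos.mpr hx1) hLdvd
    have hfin : ((Finset.lcm (Finset.Icc 2 (Δ ^ (s + 1) - 1)) id : ℕ) : ℤ)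
        ≤ |x (Sum.inl ())| := by
      rw [Int.abs_eq_natAbs]
      exact_mod_cast hle
    exact ⟨hfin, ⟨Sum.inl (), hfin⟩⟩
  refine ⟨?_, key, ?_⟩
  · intro p q
    have hd : ∀ z i : ℕ, (digit Δ z i : ℤ) < Δ := by
      intro z i
      exact_mod_cast Nat.mod_lt _ (by omega)
    cases q with
    | inl u =>
      simp only [A']
      split_ifs <;> simp <;> omega
    | inr wj =>
      obtain ⟨w, j⟩ := wj
      simp only [A']
      split_ifs with h1 h2 h3 h4
      · rw [abs_of_nonneg (by positivity)]
        exact (hd _ _).le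
      · simp
      · simp; omega
      · simp
      · simp
  · intro g hg
    exact ((key g hg.2.1).2 hg.1).2
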